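/- Let x', y' ∈ {0,1}^m. Suppose Alice appends A ones (and possibly zeros) and Bob appends B ones (and possibly zeros) to extend x', y' to strings x, y ∈ {0,1}^{m+s} agreeing with x', y' on the first m coordinates. Then for any target increase C in Hamming distance (i.e., Δ(x,y) = Δ(x',y') + C): such an extension exists if and only if |A - B| ≤ C ≤ A + B, C ≡ A + B (mod 2), and s ≥ (A + B + C)/2. -/

import Mathlib

/-- Hamming weight of a Boolean string indexed by a finite type. -/
def wt {α : Type*} [Fintype α] (x : α → Bool) : ℕ :=
  (Finset.univ.filter fun i => x i = true).card

lemma ham_sum {m s : ℕ} (x y : Fin m → Bool) (u v : Fin s → Bool) :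
    hammingDist (Sum.elim x u) (Sum.elim y v) = hammingDist x y + hammingDist u v := by
  simp only [hammingDist]
  rw [Finset.card_filter, Finset.card_filter, Finset.card_filter, Fintype.sum_sum_type]
  simp
  congr 1 <;> exact Finset.sum_congr rfl fun i _ => by split_ifs <;> simp_all

lemma card_cond (s : ℕ) (p : ℕ → Prop) [DecidablePred p] :
    (Finset.univ.filter fun i : Fin s => p i).card = ((Finset.range s).filter p).card := by
  rw [Finset.card_filter, Finset.card_filter]
  exact Fin.sum_univ_eq_sum_range (fun i => if p i then 1 else 0) s

/-- Padding: one can extend x', y' ∈ {0,1}^m by s coordinates, with the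
    extension of x having weight A and that of y having weight B, so that the
    Hamming distance increases by exactly C, iff |A-B| ≤ C ≤ A+B,
    C ≡ A+B (mod 2), and s ≥ (A+B+C)/2. -/
theorem stmt_15 (m s A B C : ℕ) (x' y' : Fin m → Bool) :
    (∃ u v : Fin s → Bool, wt u = A ∧ wt v = B ∧
        hammingDist (Sum.elim x' u) (Sum.elim y' v) = hammingDist x' y' + C) ↔
      (|(A : ℤ) - B| ≤ C ∧ C ≤ A + B ∧ C % 2 = (A + B) % 2 ∧ (A + B + C) / 2 ≤ s) := by
  have key : (∃ u v : Fin s → Bool, wt u = A ∧ wt v = B ∧ hammingDist u v = C) ↔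
      (∃ u v : Fin s → Bool, wt u = A ∧ wt v = B ∧
        hammingDist (Sum.elim x' u) (Sum.elim y' v) = hammingDist x' y' + C) := by
    constructor
    · rintro ⟨u, v, hu, hv, hd⟩
      exact ⟨u, v, hu, hv, by rw [ham_sum, hd]⟩
    · rintro ⟨u, v, hu, hv, hd⟩
      rw [ham_sum] at hd
      exact ⟨u, v, hu, hv, by omega⟩
  rw [← key]
  constructor
  · rintro ⟨u, v, hu, hv, hd⟩
    set Sa := Finset.univ.filter (fun i => u i = true ∧ v i = false) with hSa
    set Sb := Finset.univ.filter (fun i => u i = false ∧ v i = true) with hSb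
    set Sc := Finset.univ.filter (fun i => u i = true ∧ v i = true) with hSc
    have h1 : wt u = Sa.card + Sc.card := by
      simp only [wt, hSa, hSc, Finset.card_filter, ← Finset.sum_add_distrib]
      apply Finset.sum_congr rfl
      intro i _
      cases hui : u i <;> cases hvi : v i <;> simp [hui, hvi]
    have h2 : wt v = Sb.card + Sc.card := by
      simp only [wt, hSb, hSc, Finset.card_filter, ← Finset.sum_add_distrib]
      apply Finset.sum_congr rfl
      intro i _
      cases hui : u i <;> cases hvi : v i <;> simp [hui, hvi]
    have h3 : hammingDist u v = Sa.card + Sb.card := by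
      simp only [hammingDist, hSa, hSb, Finset.card_filter, ← Finset.sum_add_distrib]
      apply Finset.sum_congr rfl
      intro i _
      cases hui : u i <;> cases hvi : v i <;> simp [hui, hvi]
    have h4 : Sa.card + Sb.card + Sc.card ≤ s := by
      have : Sa.card + Sb.card + Sc.card = ∑ i : Fin s,
          ((if u i = true ∧ v i = false then 1 else 0) +
            (if u i = false ∧ v i = true then 1 else 0) +
            (if u i = true ∧ v i = true then 1 else 0)) := by
        simp only [hSa, hSb, hSc, Finset.card_filter, Finset.sum_add_distrib]
      rw [this]
      calc _ ≤ ∑ _i : Fin s, 1 := by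
              apply Finset.sum_le_sum
              intro i _
              cases hui : u i <;> cases hvi : v i <;> simp [hui, hvi]
           _ = s := by simp
    refine ⟨?_, by omega, by omega, by omega⟩
    rw [abs_le]
    constructor <;> omega
  · rintro ⟨habs, hle, hpar, hs⟩
    have habs' := abs_le.mp habs
    have hAB : A ≤ B + C ∧ B ≤ A + C := by
      constructor <;> [have := habs'.1; have := habs'.2] <;> omega
    set a := (A + C - B) / 2 with ha
    set b := (B + C - A) / 2 with hb
    set c := (A + B - C) / 2 with hc
    have hac : a + c = A := by omega
    have hbc : b + c = B := by omega
    have hab : a + b = C := by omega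
    have habc : a + b + c ≤ s := by omega
    refine ⟨fun i => decide ((i : ℕ) < a ∨ (a + b ≤ (i : ℕ) ∧ (i : ℕ) < a + b + c)),
           fun i => decide (a ≤ (i : ℕ) ∧ (i : ℕ) < a + b + c), ?_, ?_, ?_⟩
    · rw [wt]
      simp only [decide_eq_true_eq]
      rw [card_cond s (fun i => i < a ∨ (a + b ≤ i ∧ i < a + b + c))]
      have : (Finset.range s).filter (fun i => i < a ∨ (a + b ≤ i ∧ i < a + b + c)) =
          Finset.Ico 0 a ∪ Finset.Ico (a + b) (a + b + c) := by
        ext i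
        simp only [Finset.mem_filter, Finset.mem_range, Finset.mem_union, Finset.mem_Ico]
        omega
      rw [this, Finset.card_union_of_disjoint, Nat.card_Ico, Nat.card_Ico]
      · omega
      · rw [Finset.disjoint_left]
        intro i hi hi'
        simp only [Finset.mem_Ico] at hi hi'
        omega
    · rw [wt]
      simp only [decide_eq_true_eq]
      rw [card_cond s (fun i => a ≤ i ∧ i < a + b + c)]
      have : (Finset.range s).filter (fun i => a ≤ i ∧ i < a + b + c) =
          Finset.Ico a (a + b + c) := by
        ext i
        simp only [Finset.mem_filter, Finset.mem_range, Finset.mem_Ico]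
        omega
      rw [this, Nat.card_Ico]
      omega
    · rw [hammingDist]
      simp only [ne_eq, decide_eq_decide]
      rw [card_cond s (fun i => ¬((i < a ∨ (a + b ≤ i ∧ i < a + b + c)) ↔
          (a ≤ i ∧ i < a + b + c)))]
      have : (Finset.range s).filter (fun i => ¬((i < a ∨ (a + b ≤ i ∧ i < a + b + c)) ↔
          (a ≤ i ∧ i < a + b + c))) = Finset.Ico 0 (a + b) := by
        ext i
        simp only [Finset.mem_filter, Finset.mem_range, Finset.mem_Ico]
        omega
      rw [this, Nat.card_Ico]
      omega
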